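/- Let ν > 0, C₀ > 0, C₁ > 0 be real numbers and set K := 2·max{√(ν² + 4C₁²)/(ν·C₁), 1/C₀}. Then for every λ ∈ ℂ with Re λ ≥ 0 such that Re λ > C₀ or |Im λ| > C₁, and all real numbers a ≥ 0 and b ≥ 0, one has (√a + √b)² ≤ K·|conj(λ)·a + (λ + ν)·b|, where conj(λ) is the complex conjugate of λ and |·| the complex modulus. -/

import Mathlib

private lemma resolvent_core_aux (ν C₀ C₁ x y a b M : ℝ)
    (hν : 0 < ν) (hC₀ : 0 < C₀) (hC₁ : 0 < C₁)
    (hre : 0 ≤ x) (hcase : C₀ < x ∨ C₁ < |y|)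
    (ha : 0 ≤ a) (hb : 0 ≤ b) (hM0 : 0 ≤ M)
    (hsq : M ^ 2 = (x * a + (x + ν) * b) ^ 2 + (y * (b - a)) ^ 2) :
    a + b ≤ max (Real.sqrt (ν ^ 2 + 4 * C₁ ^ 2) / (ν * C₁)) (1 / C₀) * M := by
  rcases hcase with h | h
  · have hR : C₀ * (a + b) ≤ x * a + (x + ν) * b := by nlinarith
    have hRM : x * a + (x + ν) * b ≤ M := by
      nlinarith [sq_nonneg (y * (b - a)), sq_nonneg (M - (x * a + (x + ν) * b)),
        sq_nonneg (M + (x * a + (x + ν) * b))]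
    have h1 : a + b ≤ (1 / C₀) * M := by
      rw [div_mul_eq_mul_div, le_div_iff₀ hC₀]
      nlinarith
    exact h1.trans (mul_le_mul_of_nonneg_right (le_max_right _ _) hM0)
  · set c := Real.sqrt (ν ^ 2 + 4 * C₁ ^ 2) / (ν * C₁) with hc
    have hc0 : 0 ≤ c := div_nonneg (Real.sqrt_nonneg _) (by positivity)
    have hcsq : c ^ 2 = (ν ^ 2 + 4 * C₁ ^ 2) / (ν * C₁) ^ 2 := by
      rw [hc, div_pow, Real.sq_sqrt (by positivity)]
    have hy2 : C₁ ^ 2 ≤ y ^ 2 := by nlinarith [abs_nonneg y, sq_abs y]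
    have hRb : ν * b ≤ x * a + (x + ν) * b := by nlinarith
    have hkey : (a + b) ^ 2 ≤ (c * M) ^ 2 := by
      have h1 : ν ^ 2 * b ^ 2 ≤ (x * a + (x + ν) * b) ^ 2 := by
        nlinarith [hRb, mul_nonneg hν.le hb]
      have h2 : C₁ ^ 2 * (b - a) ^ 2 ≤ (y * (b - a)) ^ 2 := by
        nlinarith [sq_nonneg (b - a)]
      have hMsq : ν ^ 2 * b ^ 2 + C₁ ^ 2 * (b - a) ^ 2 ≤ M ^ 2 := by
        rw [hsq]; linarith
      have hexp : (c * M) ^ 2 = (ν ^ 2 + 4 * C₁ ^ 2) / (ν * C₁) ^ 2 * M ^ 2 := by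
        rw [mul_pow, hcsq]
      rw [hexp, div_mul_eq_mul_div, le_div_iff₀ (by positivity : (0:ℝ) < (ν * C₁) ^ 2)]
      nlinarith [sq_nonneg (2 * C₁ ^ 2 * (a - b) - ν ^ 2 * b), sq_nonneg (b - a),
        mul_pos hν hC₁]
    have h1 : a + b ≤ c * M :=
      le_of_pow_le_pow_left₀ two_ne_zero (mul_nonneg hc0 hM0) hkey
    exact h1.trans (mul_le_mul_of_nonneg_right (le_max_left _ _) hM0)

/-- Let `ν, C₀, C₁ > 0` and
`K := 2·max{√(ν² + 4C₁²)/(ν·C₁), 1/C₀}`.  Then for every `λ ∈ ℂ` with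
`Re λ ≥ 0` and (`Re λ > C₀` or `|Im λ| > C₁`), and all reals `a, b ≥ 0`,
`(√a + √b)² ≤ K·|conj(λ)·a + (λ + ν)·b|`. -/
theorem resolvent_core_inequality (ν C₀ C₁ : ℝ)
    (hν : 0 < ν) (hC₀ : 0 < C₀) (hC₁ : 0 < C₁) :
    ∀ l : ℂ, 0 ≤ l.re → (C₀ < l.re ∨ C₁ < |l.im|) →
      ∀ a b : ℝ, 0 ≤ a → 0 ≤ b →
        (Real.sqrt a + Real.sqrt b) ^ 2 ≤
          (2 * max (Real.sqrt (ν ^ 2 + 4 * C₁ ^ 2) / (ν * C₁)) (1 / C₀)) *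
            ‖(starRingEnd ℂ) l * (a : ℂ) + (l + (ν : ℂ)) * (b : ℂ)‖ := by
  intro l hre hcase a b ha hb
  have hzre : ((starRingEnd ℂ) l * (a : ℂ) + (l + (ν : ℂ)) * (b : ℂ)).re
      = l.re * a + (l.re + ν) * b := by
    simp [Complex.add_re, Complex.mul_re]
  have hzim : ((starRingEnd ℂ) l * (a : ℂ) + (l + (ν : ℂ)) * (b : ℂ)).im
      = l.im * (b - a) := by
    simp [Complex.add_im, Complex.mul_im]
    ring
  have hM0 : 0 ≤ ‖(starRingEnd ℂ) l * (a : ℂ) + (l + (ν : ℂ)) * (b : ℂ)‖ :=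
    norm_nonneg _
  have hsq : ‖(starRingEnd ℂ) l * (a : ℂ) + (l + (ν : ℂ)) * (b : ℂ)‖ ^ 2
      = (l.re * a + (l.re + ν) * b) ^ 2 + (l.im * (b - a)) ^ 2 := by
    rw [Complex.sq_norm, Complex.normSq_apply, hzre, hzim]; ring
  have main := resolvent_core_aux ν C₀ C₁ l.re l.im a b
    ‖(starRingEnd ℂ) l * (a : ℂ) + (l + (ν : ℂ)) * (b : ℂ)‖
    hν hC₀ hC₁ hre hcase ha hb hM0 hsq
  have step1 : (Real.sqrt a + Real.sqrt b) ^ 2 ≤ 2 * (a + b) := by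
    have h1 := Real.sq_sqrt ha
    have h2 := Real.sq_sqrt hb
    nlinarith [sq_nonneg (Real.sqrt a - Real.sqrt b), Real.sqrt_nonneg a,
      Real.sqrt_nonneg b]
  nlinarith [main, step1]
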